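/- Fix ρ ∈ (0,1). The function h(x) = ln(ρ + (1 − ρ)/x) / ln x is strictly increasing on the interval (1, ∞). Equivalently, for all reals x' > x > 1: ln((1 − ρ)/x + ρ) − (ln x / ln x') · ln((1 − ρ)/x' + ρ) < 0. (This is the key inequality in the proof that thin trees diversify better than fat trees.) -/

import Mathlib

lemma log_ratio_key (ρ x x' : ℝ) (hρ0 : 0 < ρ) (hρ1 : ρ < 1) (hx : 1 < x) (hxx' : x < x') :
    Real.log (ρ + (1 - ρ) / x) < Real.log x / Real.log x' * Real.log (ρ + (1 - ρ) / x') := by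
  have hx' : 1 < x' := hx.trans hxx'
  have hx0 : (0:ℝ) < x := lt_trans one_pos hx
  have hx'0 : (0:ℝ) < x' := lt_trans one_pos hx'
  have hlx : 0 < Real.log x := Real.log_pos hx
  have hlx' : 0 < Real.log x' := Real.log_pos hx'
  set l : ℝ := Real.log x / Real.log x' with hl
  have hl0 : 0 < l := div_pos hlx hlx'
  have hl1 : l < 1 := (div_lt_one hlx').2 (Real.log_lt_log hx0 hxx')
  have hne : (1:ℝ) ≠ 1 / x' := by
    have : 1 / x' < 1 := by
      rw [div_lt_one hx'0]; exact hx'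
    exact (ne_of_gt this)
  have hcon := (Real.strictConcaveOn_rpow hl0 hl1).2 (Set.mem_Ici.2 (by norm_num : (0:ℝ) ≤ 1))
    (Set.mem_Ici.2 (by positivity : (0:ℝ) ≤ 1 / x')) hne hρ0 (by linarith : 0 < 1 - ρ)
    (by ring)
  simp only [smul_eq_mul, mul_one, Real.one_rpow] at hcon
  -- (1/x')^l = 1/x
  have hpow : (1 / x') ^ l = 1 / x := by
    rw [Real.rpow_def_of_pos (by positivity)]
    have : Real.log (1 / x') = -Real.log x' := by
      rw [one_div, Real.log_inv]
    rw [this]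
    have hll : -Real.log x' * l = -Real.log x := by
      field_simp [hl]
      rw [hl]; field_simp [hlx'.ne']
    rw [hll, Real.exp_neg, Real.exp_log hx0, one_div]
  rw [hpow] at hcon
  -- hcon : ρ + (1-ρ) * (1/x) < (ρ + (1-ρ)*(1/x'))^l
  have h1ρ : (0:ℝ) < 1 - ρ := by linarith
  have ha'0 : 0 < ρ + (1 - ρ) * (1 / x') := add_pos hρ0 (mul_pos h1ρ (by positivity))
  have ha0 : 0 < ρ + (1 - ρ) * (1 / x) := add_pos hρ0 (mul_pos h1ρ (by positivity))
  have h1 : Real.log (ρ + (1 - ρ) * (1 / x)) < Real.log ((ρ + (1 - ρ) * (1 / x')) ^ l) :=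
    Real.log_lt_log ha0 hcon
  rw [Real.log_rpow ha'0] at h1
  have e1 : ρ + (1 - ρ) / x = ρ + (1 - ρ) * (1 / x) := by ring
  have e2 : ρ + (1 - ρ) / x' = ρ + (1 - ρ) * (1 / x') := by ring
  rw [e1, e2]
  exact h1

/-- The key inequality in the proof that thin trees diversify better than fat trees: for fixed
`ρ ∈ (0,1)`, the function `h(x) = ln(ρ + (1-ρ)/x) / ln x` is strictly increasing on `(1, ∞)`;
equivalently, for `x' > x > 1`,
`ln((1-ρ)/x + ρ) - (ln x / ln x')·ln((1-ρ)/x' + ρ) < 0`. -/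
theorem log_ratio_strictMono (ρ : ℝ) (hρ0 : 0 < ρ) (hρ1 : ρ < 1) :
    StrictMonoOn (fun x : ℝ => Real.log (ρ + (1 - ρ) / x) / Real.log x) (Set.Ioi 1) ∧
    ∀ x x' : ℝ, 1 < x → x < x' →
      Real.log ((1 - ρ) / x + ρ) - Real.log x / Real.log x' * Real.log ((1 - ρ) / x' + ρ)
        < 0 := by
  constructor
  · intro x hx x' hx' hxx'
    simp only [Set.mem_Ioi] at hx hx'
    have key := log_ratio_key ρ x x' hρ0 hρ1 hx hxx'
    have hlx : 0 < Real.log x := Real.log_pos hx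
    have hlx' : 0 < Real.log x' := Real.log_pos (hx.trans hxx')
    rw [div_lt_div_iff₀ hlx hlx']
    have h3 := mul_lt_mul_of_pos_right key hlx'
    have h4 : Real.log x / Real.log x' * Real.log (ρ + (1 - ρ) / x') * Real.log x'
        = Real.log (ρ + (1 - ρ) / x') * Real.log x := by
      field_simp
    rw [h4] at h3
    exact h3
  · intro x x' hx hxx'
    have key := log_ratio_key ρ x x' hρ0 hρ1 hx hxx'
    have e1 : (1 - ρ) / x + ρ = ρ + (1 - ρ) / x := by ring
    have e2 : (1 - ρ) / x' + ρ = ρ + (1 - ρ) / x' := by ring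
    rw [e1, e2]
    linarith
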